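/- Let T > 0, let β : ℝⁿ → ℝⁿ be Lipschitz with constant K_β, let 0 = s₀ < s₁ < ⋯ < s_N = T, let ω̂ : [0,T] → ℝⁿ be continuous, and let x_N ∈ ℝⁿ. Define the explicit Euler approximation X̂_N : [0,T] → ℝⁿ by X̂_N(0) = x_N and X̂_N(s) = X̂_N(s_{k−1}) − β(X̂_N(s_{k−1}))(s − s_{k−1}) + ω̂(s) − ω̂(s_{k−1}) for s ∈ (s_{k−1}, s_k], k = 1, …, N. Then ‖X̂_N‖_T ≤ e^{K_β T} ( ‖x_N‖ + ‖β(0)‖ T + 2 ‖ω̂‖_T ), and for every δ ∈ (0,T], Δ_δ X̂_N ≤ ( K_β ‖X̂_N‖_T + ‖β(0)‖ ) δ + Δ_δ ω̂. -/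
import Mathlib


open MeasureTheory

/-- The sup norm `‖f‖_T = sup_{0 ≤ u ≤ T} ‖f(u)‖` of a path. -/
noncomputable def supNorm {E : Type*} [NormedAddCommGroup E] (T : ℝ) (f : ℝ → E) : ℝ :=
  ⨆ u : Set.Icc (0 : ℝ) T, ‖f u.1‖

/-- The modulus of continuity
`Δ_δ f = sup { ‖f(s+u) − f(s)‖ : 0 ≤ s < s+u ≤ T, u ≤ δ }` of a path. -/
noncomputable def modCont {E : Type*} [NormedAddCommGroup E] (T δ : ℝ) (f : ℝ → E) : ℝ :=
  sSup {r | ∃ s u : ℝ, 0 ≤ s ∧ 0 < u ∧ u ≤ δ ∧ s + u ≤ T ∧ r = ‖f (s + u) - f s‖}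

private lemma min4' {a b c d : ℝ} (hab : a ≤ b) (hcd : c ≤ d) :
    min a d + min b c ≤ min a c + min b d := by
  simp only [min_def]
  split_ifs <;> linarith

set_option maxHeartbeats 2000000 in
/-- Lemma 4.1: uniform boundedness and equicontinuity of the explicit Euler
approximation of the backward drifting Brownian motion. -/
theorem stmt8 (n : ℕ) (T : ℝ) (hT : 0 < T) (Kβ : ℝ) (hKβ : 0 ≤ Kβ)
    (β : EuclideanSpace ℝ (Fin n) → EuclideanSpace ℝ (Fin n))
    (hβ : ∀ x y, ‖β x - β y‖ ≤ Kβ * ‖x - y‖)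
    (N : ℕ) (s : Fin (N + 1) → ℝ) (hs0 : s 0 = 0) (hsT : s (Fin.last N) = T)
    (hsm : StrictMono s)
    (ωh : ℝ → EuclideanSpace ℝ (Fin n)) (hω : ContinuousOn ωh (Set.Icc 0 T))
    (xN : EuclideanSpace ℝ (Fin n))
    (Xh : ℝ → EuclideanSpace ℝ (Fin n)) (hX0 : Xh 0 = xN)
    (hXrec : ∀ k : Fin N, ∀ v ∈ Set.Ioc (s k.castSucc) (s k.succ),
      Xh v = Xh (s k.castSucc) - (v - s k.castSucc) • β (Xh (s k.castSucc))
        + ωh v - ωh (s k.castSucc)) :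
    supNorm T Xh ≤ Real.exp (Kβ * T) * (‖xN‖ + ‖β 0‖ * T + 2 * supNorm T ωh) ∧
    ∀ δ : ℝ, 0 < δ → δ ≤ T →
      modCont T δ Xh ≤ (Kβ * supNorm T Xh + ‖β 0‖) * δ + modCont T δ ωh := by
  classical
  have hN : 0 < N := by
    rcases Nat.eq_zero_or_pos N with h | h
    · exfalso
      subst h
      have : s (Fin.last 0) = s 0 := rfl
      rw [this, hs0] at hsT
      linarith
    · exact h
  -- the extended node function
  set t : ℕ → ℝ := fun j => s ⟨min j N, Nat.lt_succ_of_le (min_le_right _ _)⟩ with htdef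
  have ht0 : t 0 = 0 := by
    have : (⟨min 0 N, Nat.lt_succ_of_le (min_le_right _ _)⟩ : Fin (N+1)) = 0 := by
      apply Fin.ext; simp
    rw [htdef]; simp only; rw [this, hs0]
  have htN : t N = T := by
    have : (⟨min N N, Nat.lt_succ_of_le (min_le_right _ _)⟩ : Fin (N+1)) = Fin.last N := by
      apply Fin.ext; simp [Fin.last]
    rw [htdef]; simp only; rw [this, hsT]
  have htmono : Monotone t := by
    intro j k hjk
    apply hsm.monotone
    simp only [Fin.mk_le_mk]
    omega
  have htstrict : ∀ k, k < N → t k < t (k+1) := by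
    intro k hk
    apply hsm
    simp only [Fin.mk_lt_mk]
    omega
  have ht_nonneg : ∀ j, 0 ≤ t j := fun j => ht0 ▸ htmono (Nat.zero_le j)
  have ht_le_T : ∀ j, t j ≤ T := by
    intro j
    rw [← hsT]
    exact hsm.monotone (Fin.le_last _)
  -- the recursion in terms of t
  have hrec' : ∀ k, k < N → ∀ v, t k < v → v ≤ t (k+1) →
      Xh v = Xh (t k) - (v - t k) • β (Xh (t k)) + ωh v - ωh (t k) := by
    intro k hk v h1 h2
    have e1 : s (Fin.castSucc ⟨k, hk⟩) = t k := by
      apply congrArg s; apply Fin.ext; simp [Fin.castSucc]; omega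
    have e2 : s (Fin.succ ⟨k, hk⟩) = t (k+1) := by
      apply congrArg s; apply Fin.ext; simp [Fin.succ]; omega
    have := hXrec ⟨k, hk⟩ v ⟨by rw [e1]; exact h1, by rw [e2]; exact h2⟩
    rw [e1] at this
    exact this
  -- the accumulated drift
  set D : ℝ → EuclideanSpace ℝ (Fin n) := fun v =>
    ∑ j ∈ Finset.range N, (min v (t (j+1)) - min v (t j)) • β (Xh (t j)) with hD
  have hD0 : D 0 = 0 := by
    rw [hD]
    apply Finset.sum_eq_zero
    intro j _
    rw [min_eq_left (ht_nonneg (j+1)), min_eq_left (ht_nonneg j), sub_self, zero_smul]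
  have hDseg : ∀ k, k < N → ∀ v, t k < v → v ≤ t (k+1) →
      D v = D (t k) + (v - t k) • β (Xh (t k)) := by
    intro k hk v h1 h2
    have key : D v - D (t k) = (v - t k) • β (Xh (t k)) := by
      rw [hD]
      simp only
      rw [← Finset.sum_sub_distrib]
      rw [Finset.sum_congr rfl (fun j hj => ?_)]
      · rw [Finset.sum_ite_eq' (Finset.range N) k]
        rw [if_pos (Finset.mem_range.2 hk)]
      · -- term j
        rw [← sub_smul]
        rcases lt_trichotomy j k with hjk | rfl | hjk
        · have e1 : t (j+1) ≤ t k := htmono (by omega)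
          have e2 : t j ≤ t k := htmono (by omega)
          rw [if_neg (by omega)]
          rw [min_eq_right (le_of_lt (lt_of_le_of_lt e1 h1)), min_eq_right e1,
            min_eq_right (le_of_lt (lt_of_le_of_lt e2 h1)), min_eq_right e2]
          rw [sub_self, zero_smul]
        · rw [if_pos rfl]
          rw [min_eq_left h2, min_eq_right (le_of_lt h1),
            min_eq_left (htmono (Nat.le_succ _)), min_self]
          rw [sub_self, sub_zero]
        · have e1 : v ≤ t j := le_trans h2 (htmono (by omega))
          have e2 : v ≤ t (j+1) := le_trans h2 (htmono (by omega))
          have e3 : t k ≤ t j := htmono (by omega)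
          have e4 : t k ≤ t (j+1) := htmono (by omega)
          rw [if_neg (by omega)]
          rw [min_eq_left e2, min_eq_left e1, min_eq_left e4, min_eq_left e3]
          rw [sub_self, sub_self, sub_self, zero_smul]
    have := sub_eq_iff_eq_add'.mp key
    exact this
  -- the node formula
  have hF : ∀ k, k ≤ N → Xh (t k) = xN - D (t k) + ωh (t k) - ωh 0 := by
    intro k
    induction k with
    | zero =>
      intro _
      rw [ht0, hD0, hX0]
      abel
    | succ k ih =>
      intro hk
      have hkN : k < N := by omega
      have h1 := htstrict k hkN
      rw [hrec' k hkN (t (k+1)) h1 le_rfl, hDseg k hkN (t (k+1)) h1 le_rfl,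
        ih (by omega)]
      abel
  -- locating a point in a segment
  have hexists_seg : ∀ v, 0 < v → v ≤ T → ∃ k, k < N ∧ t k < v ∧ v ≤ t (k+1) := by
    intro v hv0 hvT
    set S := (Finset.range N).filter (fun j => t j < v) with hS
    have h0S : 0 ∈ S := by
      rw [hS, Finset.mem_filter, Finset.mem_range]
      exact ⟨hN, by rw [ht0]; exact hv0⟩
    have hSne : S.Nonempty := ⟨0, h0S⟩
    have hkS : S.max' hSne ∈ Finset.range N ∧ t (S.max' hSne) < v :=
      Finset.mem_filter.1 (S.max'_mem hSne)
    refine ⟨S.max' hSne, Finset.mem_range.1 hkS.1, hkS.2, ?_⟩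
    by_contra h
    push_neg at h
    have hkN : S.max' hSne < N := Finset.mem_range.1 hkS.1
    have hk1N : S.max' hSne + 1 < N := by
      rcases Nat.lt_or_ge (S.max' hSne + 1) N with h' | h'
      · exact h'
      · exfalso
        have ekN : S.max' hSne + 1 = N := by omega
        rw [ekN, htN] at h
        linarith
    have hmem : S.max' hSne + 1 ∈ S :=
      Finset.mem_filter.2 ⟨Finset.mem_range.2 hk1N, h⟩
    have := Finset.le_max' S _ hmem
    omega
  -- the full formula
  have hFormula : ∀ v, 0 ≤ v → v ≤ T → Xh v = xN - D v + ωh v - ωh 0 := by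
    intro v hv0 hvT
    rcases eq_or_lt_of_le hv0 with he | hv
    · rw [← he, hD0, hX0]; abel
    · obtain ⟨k, hk, h1, h2⟩ := hexists_seg v hv hvT
      rw [hrec' k hk v h1 h2, hDseg k hk v h1 h2, hF k (by omega)]
      abel
  -- bounds on omega
  obtain ⟨Cω, hCω⟩ := isCompact_Icc.exists_bound_of_continuousOn hω
  have hbddω : BddAbove (Set.range fun u : Set.Icc (0:ℝ) T => ‖ωh u.1‖) := by
    refine ⟨Cω, ?_⟩
    rintro r ⟨u, rfl⟩
    exact hCω u.1 u.2
  have hωle : ∀ v, 0 ≤ v → v ≤ T → ‖ωh v‖ ≤ supNorm T ωh := by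
    intro v h1 h2
    exact le_ciSup hbddω (⟨v, h1, h2⟩ : Set.Icc (0:ℝ) T)
  have hW0 : 0 ≤ supNorm T ωh := le_trans (norm_nonneg _) (hωle 0 le_rfl hT.le)
  have hβle : ∀ x, ‖β x‖ ≤ Kβ * ‖x‖ + ‖β 0‖ := by
    intro x
    have h1 := hβ x 0
    rw [sub_zero] at h1
    have h2 := norm_sub_norm_le (β x) (β 0)
    linarith
  set C : ℝ := ‖xN‖ + ‖β 0‖ * T + 2 * supNorm T ωh with hCdef
  have hC0 : 0 ≤ C := by
    rw [hCdef]
    have := norm_nonneg xN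
    have := norm_nonneg (β 0)
    nlinarith [hT.le]
  -- the key sum estimate
  have hsum : ∀ v, 0 ≤ v → v ≤ T →
      (∀ j, j < N → t j < v → ‖Xh (t j)‖ ≤ C * Real.exp (Kβ * t j)) →
      ‖D v‖ ≤ ‖β 0‖ * v + C * (Real.exp (Kβ * v) - 1) := by
    intro v hv0 hvT hind
    have hterm : ∀ j ∈ Finset.range N,
        ‖(min v (t (j+1)) - min v (t j)) • β (Xh (t j))‖ ≤
          ‖β 0‖ * (min v (t (j+1)) - min v (t j)) +
            C * (Real.exp (Kβ * min v (t (j+1))) - Real.exp (Kβ * min v (t j))) := by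
      intro j hj
      have hmm' : min v (t j) ≤ min v (t (j+1)) := min_le_min le_rfl (htmono (Nat.le_succ j))
      rw [norm_smul, Real.norm_eq_abs, abs_of_nonneg (by linarith)]
      rcases eq_or_lt_of_le hmm' with he | hlt
      · rw [← he]
        simp
      · have hm'v : min v (t (j+1)) ≤ v := min_le_left _ _
        have htjv : t j < v := by
          rcases le_total v (t j) with h | h
          · exfalso
            rw [min_eq_left h] at hlt
            linarith
          · rcases lt_or_eq_of_le h with h' | h'
            · exact h'
            · exfalso
              rw [← h', min_self] at hlt
              have := min_le_left (t j) (t (j+1))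
              linarith
        have hmv : min v (t j) = t j := min_eq_right htjv.le
        have hge : t j ≤ min v (t (j+1)) := by rw [← hmv]; exact hmm'
        have hXb := hind j (Finset.mem_range.1 hj) htjv
        have hβb : ‖β (Xh (t j))‖ ≤ Kβ * (C * Real.exp (Kβ * t j)) + ‖β 0‖ := by
          have := hβle (Xh (t j))
          nlinarith [mul_le_mul_of_nonneg_left hXb hKβ]
        have hexp : Kβ * (min v (t (j+1)) - t j) * Real.exp (Kβ * t j) ≤
            Real.exp (Kβ * min v (t (j+1))) - Real.exp (Kβ * t j) := by
          have h1 := Real.add_one_le_exp (Kβ * (min v (t (j+1)) - t j))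
          have h2 : Real.exp (Kβ * (min v (t (j+1)) - t j)) *
              Real.exp (Kβ * t j) = Real.exp (Kβ * min v (t (j+1))) := by
            rw [← Real.exp_add]
            ring_nf
          nlinarith [Real.exp_pos (Kβ * t j)]
        have hscaled := mul_le_mul_of_nonneg_left hexp hC0
        have hprod := mul_le_mul_of_nonneg_left hβb
          (by linarith : (0:ℝ) ≤ min v (t (j+1)) - t j)
        rw [hmv]
        linarith [hprod, hscaled]
    calc ‖D v‖ = ‖∑ j ∈ Finset.range N, (min v (t (j+1)) - min v (t j)) • β (Xh (t j))‖ := by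
          rw [hD]
      _ ≤ ∑ j ∈ Finset.range N, ‖(min v (t (j+1)) - min v (t j)) • β (Xh (t j))‖ :=
          norm_sum_le _ _
      _ ≤ ∑ j ∈ Finset.range N, (‖β 0‖ * (min v (t (j+1)) - min v (t j)) +
            C * (Real.exp (Kβ * min v (t (j+1))) - Real.exp (Kβ * min v (t j)))) :=
          Finset.sum_le_sum hterm
      _ = ‖β 0‖ * v + C * (Real.exp (Kβ * v) - 1) := by
          rw [Finset.sum_add_distrib, ← Finset.mul_sum, ← Finset.mul_sum,
            Finset.sum_range_sub (fun j => min v (t j)),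
            Finset.sum_range_sub (fun j => Real.exp (Kβ * min v (t j)))]
          have e1 : min v (t N) = v := by rw [htN]; exact min_eq_left hvT
          have e2 : min v (t 0) = 0 := by rw [ht0]; exact min_eq_right hv0
          rw [e1, e2, mul_zero, Real.exp_zero]
          ring
  -- single-step bound
  have hstep : ∀ v, 0 ≤ v → v ≤ T →
      (∀ j, j < N → t j < v → ‖Xh (t j)‖ ≤ C * Real.exp (Kβ * t j)) →
      ‖Xh v‖ ≤ C * Real.exp (Kβ * v) := by
    intro v hv0 hvT hind
    have hf := hFormula v hv0 hvT
    have hDb := hsum v hv0 hvT hind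
    have h1 : ‖Xh v‖ ≤ ‖xN‖ + ‖D v‖ + ‖ωh v‖ + ‖ωh 0‖ := by
      rw [hf]
      have a1 := norm_sub_le (xN - D v + ωh v) (ωh 0)
      have a2 := norm_add_le (xN - D v) (ωh v)
      have a3 := norm_sub_le xN (D v)
      linarith
    have hωv := hωle v hv0 hvT
    have hω0 := hωle 0 le_rfl hT.le
    have hBv : ‖β 0‖ * v ≤ ‖β 0‖ * T := mul_le_mul_of_nonneg_left hvT (norm_nonneg _)
    have hexpand : C * (Real.exp (Kβ * v) - 1) = C * Real.exp (Kβ * v) - C := by ring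
    rw [hCdef] at *
    linarith
  -- Gronwall at nodes
  have hnode : ∀ k, k ≤ N → ‖Xh (t k)‖ ≤ C * Real.exp (Kβ * t k) := by
    intro k
    induction k using Nat.strong_induction_on with
    | _ k ih =>
      intro hk
      apply hstep (t k) (ht_nonneg k) (ht_le_T k)
      intro j hj htj
      have hjk : j < k := by
        by_contra h
        exact absurd htj (not_lt.2 (htmono (by omega)))
      exact ih j hjk (by omega)
  have hmain : ∀ v, 0 ≤ v → v ≤ T → ‖Xh v‖ ≤ C * Real.exp (Kβ * v) :=
    fun v h1 h2 => hstep v h1 h2 (fun j hj _ => hnode j hj.le)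
  have hCexp : ∀ v, 0 ≤ v → v ≤ T → ‖Xh v‖ ≤ C * Real.exp (Kβ * T) := by
    intro v h1 h2
    refine le_trans (hmain v h1 h2) ?_
    apply mul_le_mul_of_nonneg_left _ hC0
    exact Real.exp_le_exp.2 (mul_le_mul_of_nonneg_left h2 hKβ)
  haveI hne : Nonempty (Set.Icc (0:ℝ) T) := ⟨⟨0, le_rfl, hT.le⟩⟩
  have hpart1 : supNorm T Xh ≤ Real.exp (Kβ * T) * (‖xN‖ + ‖β 0‖ * T + 2 * supNorm T ωh) := by
    rw [supNorm]
    apply ciSup_le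
    intro u
    refine le_trans (hCexp u.1 u.2.1 u.2.2) ?_
    rw [hCdef]
    linarith [mul_comm (‖xN‖ + ‖β 0‖ * T + 2 * supNorm T ωh) (Real.exp (Kβ * T))]
  refine ⟨hpart1, ?_⟩
  intro δ hδ0 hδT
  have hbddX : BddAbove (Set.range fun u : Set.Icc (0:ℝ) T => ‖Xh u.1‖) := by
    refine ⟨C * Real.exp (Kβ * T), ?_⟩
    rintro r ⟨u, rfl⟩
    exact hCexp u.1 u.2.1 u.2.2
  have hXle : ∀ v, 0 ≤ v → v ≤ T → ‖Xh v‖ ≤ supNorm T Xh := by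
    intro v h1 h2
    exact le_ciSup hbddX (⟨v, h1, h2⟩ : Set.Icc (0:ℝ) T)
  have hM0 : 0 ≤ supNorm T Xh := le_trans (norm_nonneg _) (hXle 0 le_rfl hT.le)
  have hL0 : 0 ≤ Kβ * supNorm T Xh + ‖β 0‖ :=
    add_nonneg (mul_nonneg hKβ hM0) (norm_nonneg _)
  have hβL : ∀ j : ℕ, ‖β (Xh (t j))‖ ≤ Kβ * supNorm T Xh + ‖β 0‖ := by
    intro j
    have h1 := hβle (Xh (t j))
    have h2 := hXle (t j) (ht_nonneg j) (ht_le_T j)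
    linarith [mul_le_mul_of_nonneg_left h2 hKβ]
  have hDlip : ∀ a b : ℝ, 0 ≤ a → a ≤ b → b ≤ T →
      ‖D b - D a‖ ≤ (Kβ * supNorm T Xh + ‖β 0‖) * (b - a) := by
    intro a b ha hab hbT
    have hsplit : D b - D a = ∑ j ∈ Finset.range N,
        ((min b (t (j+1)) - min b (t j)) - (min a (t (j+1)) - min a (t j))) • β (Xh (t j)) := by
      rw [hD]
      simp only
      rw [← Finset.sum_sub_distrib]
      apply Finset.sum_congr rfl
      intro j _
      rw [← sub_smul]
    have hnn : ∀ j : ℕ, 0 ≤ (min b (t (j+1)) - min b (t j)) - (min a (t (j+1)) - min a (t j)) := by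
      intro j
      have := min4' (a := a) (b := b) (c := t j) (d := t (j+1)) hab (htmono (Nat.le_succ j))
      linarith
    calc ‖D b - D a‖ = ‖∑ j ∈ Finset.range N,
          ((min b (t (j+1)) - min b (t j)) - (min a (t (j+1)) - min a (t j))) • β (Xh (t j))‖ := by
          rw [hsplit]
      _ ≤ ∑ j ∈ Finset.range N,
          ‖((min b (t (j+1)) - min b (t j)) - (min a (t (j+1)) - min a (t j))) • β (Xh (t j))‖ :=
          norm_sum_le _ _
      _ ≤ ∑ j ∈ Finset.range N,
          ((min b (t (j+1)) - min b (t j)) - (min a (t (j+1)) - min a (t j))) *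
            (Kβ * supNorm T Xh + ‖β 0‖) := by
          apply Finset.sum_le_sum
          intro j _
          rw [norm_smul, Real.norm_eq_abs, abs_of_nonneg (hnn j)]
          exact mul_le_mul_of_nonneg_left (hβL j) (hnn j)
      _ = (∑ j ∈ Finset.range N,
          ((min b (t (j+1)) - min b (t j)) - (min a (t (j+1)) - min a (t j)))) *
            (Kβ * supNorm T Xh + ‖β 0‖) := by
          rw [Finset.sum_mul]
      _ = (b - a) * (Kβ * supNorm T Xh + ‖β 0‖) := by
          rw [Finset.sum_sub_distrib,
            Finset.sum_range_sub (fun j => min b (t j)),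
            Finset.sum_range_sub (fun j => min a (t j))]
          have e1 : min b (t N) = b := by rw [htN]; exact min_eq_left hbT
          have e2 : min b (t 0) = 0 := by rw [ht0]; exact min_eq_right (le_trans ha hab)
          have e3 : min a (t N) = a := by rw [htN]; exact min_eq_left (le_trans hab hbT)
          have e4 : min a (t 0) = 0 := by rw [ht0]; exact min_eq_right ha
          rw [e1, e2, e3, e4]
          ring
      _ = (Kβ * supNorm T Xh + ‖β 0‖) * (b - a) := mul_comm _ _
  have hωbdd : BddAbove {r | ∃ σ u : ℝ, 0 ≤ σ ∧ 0 < u ∧ u ≤ δ ∧ σ + u ≤ T ∧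
      r = ‖ωh (σ + u) - ωh σ‖} := by
    refine ⟨2 * supNorm T ωh, ?_⟩
    rintro r ⟨σ, u, hσ, hu, huδ, hσu, rfl⟩
    have h1 := hωle (σ + u) (by linarith) hσu
    have h2 := hωle σ hσ (by linarith)
    have h3 := norm_sub_le (ωh (σ + u)) (ωh σ)
    linarith
  have hωmod0 : 0 ≤ modCont T δ ωh := by
    have hmem : ‖ωh (0 + δ) - ωh 0‖ ∈ {r | ∃ σ u : ℝ, 0 ≤ σ ∧ 0 < u ∧ u ≤ δ ∧ σ + u ≤ T ∧
        r = ‖ωh (σ + u) - ωh σ‖} :=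
      ⟨0, δ, le_rfl, hδ0, le_rfl, by rw [zero_add]; exact hδT, rfl⟩
    rw [modCont]
    exact le_trans (norm_nonneg _) (le_csSup hωbdd hmem)
  rw [modCont]
  apply Real.sSup_le
  · rintro r ⟨σ, u, hσ, hu, huδ, hσu, rfl⟩
    have hf1 := hFormula (σ + u) (by linarith) hσu
    have hf2 := hFormula σ hσ (by linarith)
    have hdiff : Xh (σ + u) - Xh σ = (D σ - D (σ + u)) + (ωh (σ + u) - ωh σ) := by
      rw [hf1, hf2]
      abel
    have hDd := hDlip σ (σ + u) hσ (by linarith) hσu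
    have hrev : ‖D σ - D (σ + u)‖ = ‖D (σ + u) - D σ‖ := norm_sub_rev _ _
    have hωd : ‖ωh (σ + u) - ωh σ‖ ≤ modCont T δ ωh := by
      rw [modCont]
      exact le_csSup hωbdd ⟨σ, u, hσ, hu, huδ, hσu, rfl⟩
    have hLu : (Kβ * supNorm T Xh + ‖β 0‖) * u ≤ (Kβ * supNorm T Xh + ‖β 0‖) * δ :=
      mul_le_mul_of_nonneg_left huδ hL0
    calc ‖Xh (σ + u) - Xh σ‖
        = ‖(D σ - D (σ + u)) + (ωh (σ + u) - ωh σ)‖ := by rw [hdiff]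
      _ ≤ ‖D σ - D (σ + u)‖ + ‖ωh (σ + u) - ωh σ‖ := norm_add_le _ _
      _ ≤ (Kβ * supNorm T Xh + ‖β 0‖) * δ + modCont T δ ωh := by
          rw [hrev]
          have : σ + u - σ = u := by ring
          rw [this] at hDd
          linarith
  · have := mul_nonneg hL0 hδ0.le
    linarith
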